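/- Let F be a free group of finite rank n ≥ 2 with free basis X, let |w| denote the word length of w ∈ F with respect to X (the length of the reduced word representing w), and for u, v ∈ F let (u|v) = ½(|u| + |v| − |u⁻¹v|). If φ : F → F is a nontrivial endomorphism that is not injective, then the BRP fails for φ: there exists p ≥ 0 such that for every N ≥ 0 there exist u, v ∈ F with (u|v) ≤ p and (φ(u)|φ(v)) ≥ N. -/

import Mathlib

namespace Paper

/-- The Gromov product `(u|v)` at the identity in a free group, with respect to the
word length `FreeGroup.norm` for the free basis. -/
noncomputable def fgp {X : Type*} [DecidableEq X] (u v : FreeGroup X) : ℝ :=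
  ((FreeGroup.norm u : ℝ) + (FreeGroup.norm v : ℝ) - (FreeGroup.norm (u⁻¹ * v) : ℝ)) / 2

section Aux

set_option linter.unusedSectionVars false

variable {X : Type*} [DecidableEq X]

/-- "No-cancellation" relation on letters: the letter `p` immediately followed by the
letter `q` does not cancel. -/
def NC (p q : X × Bool) : Prop := ¬(p.1 = q.1 ∧ p.2 = !q.2)

lemma nc_iff (p q : X × Bool) : NC p q ↔ p ≠ (q.1, !q.2) := by
  unfold NC
  constructor
  · rintro h rfl; exact h ⟨rfl, rfl⟩
  · rintro h ⟨h1, h2⟩; exact h (Prod.ext h1 h2)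

lemma nc_iff' (p q : X × Bool) : NC p q ↔ q ≠ (p.1, !p.2) := by
  rcases p with ⟨px, pb⟩
  rcases q with ⟨qx, qb⟩
  cases pb <;> cases qb <;> simp [NC, Prod.ext_iff, eq_comm, and_comm]

lemma chain'_reduce (L : List (X × Bool)) : List.Chain' NC (FreeGroup.reduce L) := by
  induction L with
  | nil => exact List.isChain_nil
  | cons x xs ih =>
    rw [FreeGroup.reduce.cons]
    cases h : FreeGroup.reduce xs with
    | nil => exact List.isChain_singleton x
    | cons hd tl =>
      rw [h] at ih
      dsimp only
      split_ifs with hc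
      · exact ih.tail
      · exact List.isChain_cons_cons.2 ⟨hc, ih⟩

lemma reduce_eq_self {L : List (X × Bool)} (h : List.Chain' NC L) :
    FreeGroup.reduce L = L := by
  induction L with
  | nil => rfl
  | cons x xs ih =>
    rw [FreeGroup.reduce.cons, ih h.tail]
    cases xs with
    | nil => rfl
    | cons hd tl =>
      dsimp only
      rw [if_neg (List.isChain_cons_cons.1 h).1]

lemma toWord_mk_self {L : List (X × Bool)} (h : List.Chain' NC L) :
    (FreeGroup.mk L).toWord = L := by
  rw [FreeGroup.toWord_mk, reduce_eq_self h]

lemma chain'_toWord (x : FreeGroup X) : List.Chain' NC x.toWord := by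
  rw [← FreeGroup.reduce_toWord]
  exact chain'_reduce _

lemma norm_eq (x : FreeGroup X) : FreeGroup.norm x = x.toWord.length := rfl

lemma mk_singleton_inv (p : X × Bool) :
    FreeGroup.mk [(p.1, !p.2)] = (FreeGroup.mk [p])⁻¹ := by
  rw [FreeGroup.inv_mk]
  simp [FreeGroup.invRev]

lemma conj_pow_eq (c s : FreeGroup X) (m : ℕ) :
    (c * s * c⁻¹) ^ m = c * s ^ m * c⁻¹ := by
  induction m with
  | zero => group
  | succ m ih => rw [pow_succ, pow_succ, ih]; group

/-- Cyclic reduction: every nontrivial element is a conjugate of a cyclically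
reduced nontrivial element. -/
lemma cyc_aux : ∀ (n : ℕ) (h : FreeGroup X), FreeGroup.norm h = n → h ≠ 1 →
    ∃ c s : FreeGroup X, h = c * s * c⁻¹ ∧ s ≠ 1 ∧
      ∀ p ∈ s.toWord.getLast?, ∀ q ∈ s.toWord.head?, NC p q := by
  intro n
  induction n using Nat.strong_induction_on with
  | _ n ih =>
    intro h hn hne
    have hH : h.toWord ≠ [] := by
      simpa [FreeGroup.toWord_eq_nil_iff] using hne
    obtain ⟨p, T, hPT⟩ := List.exists_cons_of_ne_nil hH
    obtain ⟨q, hq⟩ : ∃ q, h.toWord.getLast? = some q :=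
      ⟨_, List.getLast?_eq_getLast hH⟩
    by_cases hc : NC q p
    · refine ⟨1, h, by group, hne, ?_⟩
      intro x hx y hy
      have hx' : x = q := by
        rw [Option.mem_def, hq, Option.some_inj] at hx; exact hx.symm
      have hy' : y = p := by
        rw [hPT] at hy; simpa using hy.symm
      rw [hx', hy']
      exact hc
    · unfold NC at hc
      push_neg at hc
      have hT : T ≠ [] := by
        rintro rfl
        have : q = p := by
          rw [hPT] at hq; simpa using hq.symm
        rw [this] at hc
        simp at hc
      have hqp : q = (p.1, !p.2) := Prod.ext hc.1 hc.2
      have hsplit : h.toWord = p :: (T.dropLast ++ [q]) := by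
        conv_lhs => rw [← List.dropLast_append_getLast? q hq]
        rw [hPT, List.dropLast_cons_of_ne_nil hT, List.cons_append]
      have hchain : List.Chain' NC (T.dropLast ++ [q]) := by
        have := chain'_toWord h
        rw [hsplit] at this
        exact this.tail
      have hchainL' : List.Chain' NC T.dropLast := hchain.left_of_append
      have hw' : (FreeGroup.mk T.dropLast).toWord = T.dropLast := toWord_mk_self hchainL'
      have hdecomp : h = FreeGroup.mk [p] * FreeGroup.mk T.dropLast * (FreeGroup.mk [p])⁻¹ := by
        rw [← mk_singleton_inv, FreeGroup.mul_mk, FreeGroup.mul_mk, ← hqp]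
        conv_lhs => rw [← FreeGroup.mk_toWord (x := h)]
        rw [hsplit]
        simp
      have hlen : FreeGroup.norm h = T.dropLast.length + 2 := by
        rw [norm_eq, hsplit]
        simp
      have hn' : FreeGroup.norm (FreeGroup.mk T.dropLast) < n := by
        rw [norm_eq, hw']
        omega
      have hne' : FreeGroup.mk T.dropLast ≠ 1 := by
        intro habs
        apply hne
        rw [habs, mul_one, mul_inv_cancel] at hdecomp
        exact hdecomp
      obtain ⟨c, s, hcs, hs1, hscyc⟩ := ih _ hn' _ rfl hne'
      refine ⟨FreeGroup.mk [p] * c, s, ?_, hs1, hscyc⟩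
      rw [hdecomp, hcs]
      group

/-- Powers of a cyclically reduced element concatenate without cancellation. -/
lemma pow_word (s : FreeGroup X) (hs : s ≠ 1)
    (hcyc : ∀ p ∈ s.toWord.getLast?, ∀ q ∈ s.toWord.head?, NC p q) :
    ∀ m : ℕ, (s ^ (m + 1)).toWord.head? = s.toWord.head? ∧
      (s ^ (m + 1)).toWord.getLast? = s.toWord.getLast? ∧
      FreeGroup.norm (s ^ (m + 1)) = (m + 1) * FreeGroup.norm s := by
  intro m
  induction m with
  | zero => simp
  | succ m ih =>
    obtain ⟨ih1, ih2, ih3⟩ := ih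
    have hS : s.toWord ≠ [] := by simpa [FreeGroup.toWord_eq_nil_iff] using hs
    have hT : (s ^ (m + 1)).toWord ≠ [] := by
      intro hnil
      rw [hnil] at ih1
      simp only [List.head?_nil] at ih1
      exact hS (List.head?_eq_none_iff.mp ih1.symm)
    have key : s ^ (m + 2) = FreeGroup.mk (s.toWord ++ (s ^ (m + 1)).toWord) := by
      rw [← FreeGroup.mul_mk, FreeGroup.mk_toWord, FreeGroup.mk_toWord, ← pow_succ']
    have hch : List.Chain' NC (s.toWord ++ (s ^ (m + 1)).toWord) := by
      refine (chain'_toWord s).append (chain'_toWord _) ?_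
      intro x hx y hy
      rw [ih1] at hy
      exact hcyc x hx y hy
    have hw : (s ^ (m + 2)).toWord = s.toWord ++ (s ^ (m + 1)).toWord := by
      rw [key, toWord_mk_self hch]
    refine ⟨?_, ?_, ?_⟩
    · rw [hw, List.head?_append_of_ne_nil _ hS]
    · rw [hw, List.getLast?_append_of_ne_nil _ hT, ih2]
    · rw [norm_eq, hw, List.length_append, ← norm_eq, ← norm_eq, ih3]
      ring

/-- Norms of powers of a nontrivial element are unbounded. -/
lemma exists_pow_norm_ge (h : FreeGroup X) (hne : h ≠ 1) (n : ℕ) :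
    ∃ m : ℕ, n + 1 ≤ FreeGroup.norm (h ^ m) := by
  obtain ⟨c, s, hcs, hs1, hscyc⟩ := cyc_aux (FreeGroup.norm h) h rfl hne
  have hnorm_s : 1 ≤ FreeGroup.norm s := by
    have := (FreeGroup.norm_eq_zero (x := s)).not.mpr hs1
    omega
  refine ⟨n + 1 + 2 * FreeGroup.norm c, ?_⟩
  set m := n + 1 + 2 * FreeGroup.norm c with hm
  have hsm : s ^ m = c⁻¹ * (h ^ m * c) := by
    rw [hcs, conj_pow_eq]
    group
  have hA := FreeGroup.norm_mul_le (c⁻¹) (h ^ m * c)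
  have hB := FreeGroup.norm_mul_le (h ^ m) c
  have hinv : FreeGroup.norm (c⁻¹) = FreeGroup.norm c := FreeGroup.norm_inv_eq
  have h1 : FreeGroup.norm (s ^ m) ≤ 2 * FreeGroup.norm c + FreeGroup.norm (h ^ m) := by
    rw [hsm]
    omega
  have h2 : FreeGroup.norm (s ^ m) = m * FreeGroup.norm s := by
    have := (pow_word s hs1 hscyc (m - 1)).2.2
    have hm1 : m - 1 + 1 = m := by omega
    rwa [hm1] at this
  have h3 : m ≤ m * FreeGroup.norm s := Nat.le_mul_of_pos_right m hnorm_s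
  omega

end Aux

/-- For a nontrivial non-injective endomorphism of a free group of finite rank at least `2`,
the bounded reduction property fails. -/
theorem brp_fails_of_not_injective
    {X : Type*} [Fintype X] [DecidableEq X] (hX : 2 ≤ Fintype.card X)
    (φ : FreeGroup X →* FreeGroup X)
    (hnt : ∃ g : FreeGroup X, φ g ≠ 1)
    (hni : ¬ Function.Injective φ) :
    ∃ p : ℝ, 0 ≤ p ∧ ∀ N : ℝ, 0 ≤ N →
      ∃ u v : FreeGroup X, fgp u v ≤ p ∧ N ≤ fgp (φ u) (φ v) := by
  refine ⟨0, le_refl 0, ?_⟩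
  intro N hN
  obtain ⟨g, hg⟩ := hnt
  rw [Function.not_injective_iff] at hni
  obtain ⟨x₁, x₂, hfeq, hneq⟩ := hni
  set a := x₁ * x₂⁻¹ with ha
  have haker : φ a = 1 := by rw [ha, map_mul, map_inv, hfeq, mul_inv_cancel]
  have hane : a ≠ 1 := by
    intro habs
    rw [ha] at habs
    exact hneq (mul_inv_eq_one.mp habs)
  -- a bound on the norms of images of single letters
  set C := ∑ x : X, FreeGroup.norm (φ (FreeGroup.of x)) with hC
  have hCb : ∀ t : X × Bool, FreeGroup.norm (φ (FreeGroup.mk [t])) ≤ C := by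
    rintro ⟨x, b⟩
    have hle : FreeGroup.norm (φ (FreeGroup.of x)) ≤ C :=
      Finset.single_le_sum (f := fun x => FreeGroup.norm (φ (FreeGroup.of x)))
        (fun _ _ => Nat.zero_le _) (Finset.mem_univ x)
    cases b
    · have hmk : FreeGroup.mk [(x, false)] = (FreeGroup.of x)⁻¹ := by
        have := mk_singleton_inv (p := ((x, true) : X × Bool))
        simpa [FreeGroup.of] using this
      rw [hmk, map_inv, FreeGroup.norm_inv_eq]
      exact hle
    · exact hle
  -- choose the exponent m
  set n := ⌈N⌉₊ with hn
  obtain ⟨m, hm⟩ := exists_pow_norm_ge (φ g) hg (n + C)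
  have hhm : φ g ^ m ≠ 1 := by
    intro habs; rw [habs, FreeGroup.norm_one] at hm; omega
  have hgm : g ^ m ≠ 1 := by
    intro habs; apply hhm; rw [← map_pow, habs, map_one]
  -- the reduced words of a and g^m
  have hA : a.toWord ≠ [] := by simpa [FreeGroup.toWord_eq_nil_iff] using hane
  have hG : (g ^ m).toWord ≠ [] := by simpa [FreeGroup.toWord_eq_nil_iff] using hgm
  obtain ⟨a1, A', hAw⟩ := List.exists_cons_of_ne_nil hA
  obtain ⟨g1, G', hGw⟩ := List.exists_cons_of_ne_nil hG
  obtain ⟨alast, hal⟩ : ∃ z, a.toWord.getLast? = some z :=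
    ⟨_, List.getLast?_eq_getLast hA⟩
  -- choose a letter t avoiding three bad letters
  have hcard3 : ({a1, (alast.1, !alast.2), (g1.1, !g1.2)} : Finset (X × Bool)).card
      < Fintype.card (X × Bool) := by
    have h1 : ({a1, (alast.1, !alast.2), (g1.1, !g1.2)} : Finset (X × Bool)).card ≤ 3 := by
      apply le_trans (Finset.card_insert_le _ _)
      have := Finset.card_insert_le ((alast.1, !alast.2)) ({(g1.1, !g1.2)} : Finset (X × Bool))
      simp only [Finset.card_singleton] at this
      omega
    have h2 : 4 ≤ Fintype.card (X × Bool) := by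
      rw [Fintype.card_prod, Fintype.card_bool]
      omega
    omega
  obtain ⟨t, ht⟩ : ∃ t : X × Bool, t ∉ ({a1, (alast.1, !alast.2), (g1.1, !g1.2)} : Finset (X × Bool)) := by
    by_contra hcon
    push_neg at hcon
    have hsub : (Finset.univ : Finset (X × Bool)) ⊆ _ := fun z _ => hcon z
    have := Finset.card_le_card hsub
    rw [Finset.card_univ] at this
    omega
  simp only [Finset.mem_insert, Finset.mem_singleton, not_or] at ht
  obtain ⟨ht1, ht2, ht3⟩ := ht
  -- the elements u and v
  set u := FreeGroup.mk (t :: (g ^ m).toWord) with hu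
  have hchU : List.Chain' NC (t :: (g ^ m).toWord) := by
    refine (chain'_toWord (g ^ m)).cons ?_
    intro y hy
    rw [hGw] at hy
    simp only [List.head?_cons, Option.mem_def, Option.some_inj] at hy
    subst hy
    exact (nc_iff t g1).mpr ht3
  have hwU : u.toWord = t :: (g ^ m).toWord := toWord_mk_self hchU
  set v := a * u with hv
  have hvmk : v = FreeGroup.mk (a.toWord ++ t :: (g ^ m).toWord) := by
    rw [hv, hu, ← FreeGroup.mul_mk, FreeGroup.mk_toWord]
  have hjun : ∀ x ∈ a.toWord.getLast?, ∀ y ∈ (t :: (g ^ m).toWord).head?, NC x y := by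
    intro x hx y hy
    rw [Option.mem_def, hal, Option.some_inj] at hx
    simp only [List.head?_cons, Option.mem_def, Option.some_inj] at hy
    subst hx
    subst hy
    exact (nc_iff' alast t).mpr ht2
  have hchV : List.Chain' NC (a.toWord ++ t :: (g ^ m).toWord) :=
    (chain'_toWord a).append hchU hjun
  have hwV : v.toWord = a.toWord ++ t :: (g ^ m).toWord := by
    rw [hvmk, toWord_mk_self hchV]
  -- the word of u⁻¹ * v
  have hiuw : (u⁻¹).toWord = FreeGroup.invRev (t :: (g ^ m).toWord) := by
    rw [FreeGroup.toWord_inv, hwU]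
  have huv : u⁻¹ * v =
      FreeGroup.mk (FreeGroup.invRev (t :: (g ^ m).toWord) ++ (a.toWord ++ t :: (g ^ m).toWord)) := by
    rw [← FreeGroup.mul_mk, hvmk, ← hiuw, FreeGroup.mk_toWord]
  have hchI : List.Chain' NC (FreeGroup.invRev (t :: (g ^ m).toWord)) := by
    rw [← hiuw]
    exact chain'_toWord _
  have hlastI : (FreeGroup.invRev (t :: (g ^ m).toWord)).getLast? = some (t.1, !t.2) := by
    unfold FreeGroup.invRev
    rw [List.getLast?_reverse]
    simp
  have hjun2 : ∀ x ∈ (FreeGroup.invRev (t :: (g ^ m).toWord)).getLast?,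
      ∀ y ∈ (a.toWord ++ t :: (g ^ m).toWord).head?, NC x y := by
    intro x hx y hy
    rw [Option.mem_def, hlastI, Option.some_inj] at hx
    rw [List.head?_append_of_ne_nil _ hA, Option.mem_def, hAw, List.head?_cons,
      Option.some_inj] at hy
    subst hx
    subst hy
    rw [nc_iff]
    intro habs
    apply ht1
    rcases t with ⟨tx, tb⟩
    rcases a1 with ⟨yx, yb⟩
    simp only [Prod.ext_iff] at habs ⊢
    cases tb <;> cases yb <;> simp_all
  have hchW : List.Chain' NC
      (FreeGroup.invRev (t :: (g ^ m).toWord) ++ (a.toWord ++ t :: (g ^ m).toWord)) :=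
    hchI.append hchV hjun2
  have hwW : (u⁻¹ * v).toWord =
      FreeGroup.invRev (t :: (g ^ m).toWord) ++ (a.toWord ++ t :: (g ^ m).toWord) := by
    rw [huv, toWord_mk_self hchW]
  -- norms
  have nU : FreeGroup.norm u = (g ^ m).toWord.length + 1 := by
    rw [norm_eq, hwU]; simp
  have nV : FreeGroup.norm v = a.toWord.length + ((g ^ m).toWord.length + 1) := by
    rw [norm_eq, hwV]; simp
  have nW : FreeGroup.norm (u⁻¹ * v) =
      ((g ^ m).toWord.length + 1) + (a.toWord.length + ((g ^ m).toWord.length + 1)) := by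
    rw [norm_eq, hwW]
    simp [FreeGroup.invRev_length]
  refine ⟨u, v, ?_, ?_⟩
  · unfold fgp
    rw [nU, nV, nW]
    push_cast
    ring_nf
    norm_num
  · -- the image side
    have hφv : φ v = φ u := by rw [hv, map_mul, haker, one_mul]
    have hfgpeq : fgp (φ u) (φ v) = (FreeGroup.norm (φ u) : ℝ) := by
      rw [hφv]
      unfold fgp
      rw [inv_mul_cancel, FreeGroup.norm_one]
      push_cast
      ring
    rw [hfgpeq]
    -- norm of φ u is large
    have hufact : φ u = φ (FreeGroup.mk [t]) * φ g ^ m := by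
      rw [hu]
      have hsplit : FreeGroup.mk (t :: (g ^ m).toWord) =
          FreeGroup.mk [t] * FreeGroup.mk ((g ^ m).toWord) := by
        rw [FreeGroup.mul_mk, List.singleton_append]
      rw [hsplit, FreeGroup.mk_toWord, map_mul, map_pow]
    have hrec : φ g ^ m = (φ (FreeGroup.mk [t]))⁻¹ * φ u := by
      rw [hufact, ← mul_assoc, inv_mul_cancel, one_mul]
    have hb := FreeGroup.norm_mul_le (φ (FreeGroup.mk [t]))⁻¹ (φ u)
    rw [← hrec] at hb
    have hinv : FreeGroup.norm ((φ (FreeGroup.mk [t]))⁻¹) =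
        FreeGroup.norm (φ (FreeGroup.mk [t])) := FreeGroup.norm_inv_eq
    have hCt := hCb t
    have hfin : n ≤ FreeGroup.norm (φ u) := by omega
    calc N ≤ (n : ℝ) := Nat.le_ceil N
      _ ≤ (FreeGroup.norm (φ u) : ℝ) := by exact_mod_cast hfin

end Paper
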